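/- arXiv:2105.11634 — 4 statements merged into one kernel-verified Lean document; each statement's English description precedes it below -/
import Mathlib

section
/- Let x₁, ..., x_N be strictly positive real numbers. Then the N×N matrix A with entries A_{ij} = min(x_i, x_j) is positive semi-definite. -/
open MeasureTheory Set Matrix

lemma aux_min_integral (a b : ℝ) (ha : 0 < a) (hb : 0 < b) :
    ∫ t : ℝ, ((Ioc (0:ℝ) a).indicator (fun _ => (1:ℝ)) t) *
      ((Ioc (0:ℝ) b).indicator (fun _ => (1:ℝ)) t) = min a b := by
  have h1 : (fun t => ((Ioc (0:ℝ) a).indicator (fun _ => (1:ℝ)) t) *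
      ((Ioc (0:ℝ) b).indicator (fun _ => (1:ℝ)) t))
      = (Ioc (0:ℝ) (min a b)).indicator (fun _ => (1:ℝ)) := by
    funext t
    rw [← Set.inter_indicator_mul]
    simp [Set.Ioc_inter_Ioc]
  rw [h1, integral_indicator_const _ measurableSet_Ioc]
  simp [Real.volume_Ioc, ENNReal.toReal_ofReal (le_min ha.le hb.le), ha.le, hb.le]

theorem min_matrix_posSemidef_of_pos (N : ℕ) (x : Fin N → ℝ) (hx : ∀ i, 0 < x i) :
    (Matrix.of fun i j => min (x i) (x j)).PosSemidef := by
  set f : Fin N → ℝ → ℝ := fun i => (Ioc (0:ℝ) (x i)).indicator (fun _ => (1:ℝ)) with hf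
  rw [Matrix.posSemidef_iff_dotProduct_mulVec]
  constructor
  · ext i j
    simp [Matrix.conjTranspose, min_comm]
  · intro v
    have hint : ∀ i j : Fin N,
        Integrable (fun t => (v i * f i t) * (v j * f j t)) := by
      intro i j
      have : (fun t => (v i * f i t) * (v j * f j t))
          = (Ioc (0:ℝ) (min (x i) (x j))).indicator (fun _ => v i * v j) := by
        funext t
        have : f i t * f j t = (Ioc (0:ℝ) (min (x i) (x j))).indicator (fun _ => (1:ℝ)) t := by
          rw [hf]
          rw [← Set.inter_indicator_mul]
          simp [Set.Ioc_inter_Ioc]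
        rw [show (v i * f i t) * (v j * f j t) = (v i * v j) * (f i t * f j t) by ring, this]
        simp [Set.indicator_apply]
      rw [this]
      exact (integrable_indicator_iff measurableSet_Ioc).2
        (integrableOn_const (by simp [Real.volume_Ioc]))
    have key : star v ⬝ᵥ ((Matrix.of fun i j => min (x i) (x j)) *ᵥ v)
        = ∫ t : ℝ, (∑ i, v i * f i t) ^ 2 := by
      have expand : ∀ t : ℝ, (∑ i, v i * f i t) ^ 2
          = ∑ i, ∑ j, (v i * f i t) * (v j * f j t) := by
        intro t
        rw [sq, Finset.sum_mul_sum]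
      rw [show (fun t => (∑ i, v i * f i t) ^ 2)
          = fun t => ∑ i, ∑ j, (v i * f i t) * (v j * f j t) from funext expand]
      rw [integral_finset_sum _ (fun i _ => integrable_finset_sum _ (fun j _ => hint i j))]
      simp only [fun i => integral_finset_sum Finset.univ (fun j (_ : j ∈ Finset.univ) => hint i j)]
      simp only [dotProduct, Matrix.mulVec, dotProduct, Matrix.of_apply,
        Pi.star_apply, star_trivial]
      rw [Finset.sum_congr rfl]
      intro i _
      rw [Finset.mul_sum, Finset.sum_congr rfl]
      intro j _
      have := aux_min_integral (x i) (x j) (hx i) (hx j)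
      rw [show (fun t => (v i * f i t) * (v j * f j t))
          = fun t => (v i * v j) * (f i t * f j t) from funext (fun t => by ring)]
      rw [integral_const_mul, hf]
      rw [this]
      ring
    rw [key]
    exact integral_nonneg (fun t => sq_nonneg _)
end

section
/- Let x₁, ..., x_N be arbitrary real numbers. Then the N×N matrix K with entries K_{ij} = sign(x_i x_j)·min(|x_i|, |x_j|) is symmetric and positive semi-definite. -/
open MeasureTheory

lemma sign_mul' (a b : ℝ) : Real.sign (a*b) = Real.sign a * Real.sign b := by
  rcases lt_trichotomy a 0 with h|h|h <;> rcases lt_trichotomy b 0 with h'|h'|h' <;>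
    simp [Real.sign_of_pos, Real.sign_of_neg, h, h', mul_pos, mul_neg_of_pos_of_neg,
      mul_neg_of_neg_of_pos, mul_pos_of_neg_of_neg]

lemma ind_integrable (a : ℝ) : Integrable ((Set.Ioo (0:ℝ) a).indicator (fun _ => (1:ℝ))) := by
  rw [integrable_indicator_iff measurableSet_Ioo]
  exact integrableOn_const (by simp [Real.volume_Ioo])

lemma ind_mul_ind (a b t : ℝ) :
    (Set.Ioo (0:ℝ) a).indicator (fun _ => (1:ℝ)) t *
      (Set.Ioo (0:ℝ) b).indicator (fun _ => (1:ℝ)) t =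
      (Set.Ioo (0:ℝ) (min a b)).indicator (fun _ => (1:ℝ)) t := by
  rw [← Set.inter_indicator_mul, Set.Ioo_inter_Ioo]
  simp

lemma integral_ind_mul (a b : ℝ) (ha : 0 ≤ a) (hb : 0 ≤ b) :
    ∫ t, (Set.Ioo (0:ℝ) a).indicator (fun _ => (1:ℝ)) t *
      (Set.Ioo (0:ℝ) b).indicator (fun _ => (1:ℝ)) t = min a b := by
  simp_rw [ind_mul_ind]
  have := integral_indicator_one (μ := volume) (measurableSet_Ioo (a := (0:ℝ)) (b := min a b))
  refine (this : _ = _).trans ?_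
  simp only [measureReal_def, Real.volume_Ioo, sub_zero, ENNReal.toReal_ofReal (le_min ha hb)]

theorem sign_min_matrix_posSemidef (N : ℕ) (x : Fin N → ℝ) :
    (Matrix.of fun i j => Real.sign (x i * x j) * min |x i| |x j|).IsSymm ∧
    (Matrix.of fun i j => Real.sign (x i * x j) * min |x i| |x j|).PosSemidef := by
  have hsymm : (Matrix.of fun i j => Real.sign (x i * x j) * min |x i| |x j|).IsSymm := by
    ext i j
    simp only [Matrix.transpose_apply, Matrix.of_apply]
    rw [mul_comm (x j), min_comm]
  refine ⟨hsymm, Matrix.PosSemidef.of_dotProduct_mulVec_nonneg hsymm ?_⟩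
  intro v
  set f : Fin N → ℝ → ℝ :=
    fun i t => v i * Real.sign (x i) * (Set.Ioo (0:ℝ) |x i|).indicator (fun _ => (1:ℝ)) t with hf
  have hint : ∀ i j, Integrable (fun t => f i t * f j t) := by
    intro i j
    have h1 : (fun t => f i t * f j t) = fun t =>
        (v i * Real.sign (x i) * (v j * Real.sign (x j))) *
          (Set.Ioo (0:ℝ) (min |x i| |x j|)).indicator (fun _ => (1:ℝ)) t := by
      funext t
      rw [← ind_mul_ind]
      simp only [hf]
      ring
    rw [h1]
    exact (ind_integrable _).const_mul _
  have key : ∀ i j, v i * ((Real.sign (x i * x j) * min |x i| |x j|) * v j) =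
      ∫ t, f i t * f j t := by
    intro i j
    have h1 : (fun t => f i t * f j t) = fun t =>
        (v i * Real.sign (x i) * (v j * Real.sign (x j))) *
          ((Set.Ioo (0:ℝ) |x i|).indicator (fun _ => (1:ℝ)) t *
            (Set.Ioo (0:ℝ) |x j|).indicator (fun _ => (1:ℝ)) t) := by
      funext t; simp only [hf]; ring
    rw [h1, integral_const_mul _ _, integral_ind_mul _ _ (abs_nonneg _) (abs_nonneg _), sign_mul']
    ring
  have e1 : dotProduct (star v)
      ((Matrix.of fun i j => Real.sign (x i * x j) * min |x i| |x j|).mulVec v)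
      = ∑ i, ∑ j, v i * ((Real.sign (x i * x j) * min |x i| |x j|) * v j) := by
    simp [dotProduct, Matrix.mulVec, Finset.mul_sum]
  rw [e1]
  have e2 : ∀ i : Fin N, ∑ j, v i * ((Real.sign (x i * x j) * min |x i| |x j|) * v j)
      = ∫ t, ∑ j, f i t * f j t := by
    intro i
    rw [integral_finset_sum _ (fun j _ => hint i j)]
    exact Finset.sum_congr rfl fun j _ => key i j
  simp_rw [e2]
  rw [← integral_finset_sum _ (fun i _ =>
    integrable_finset_sum _ (fun j _ => hint i j))]
  have e3 : ∀ t : ℝ, ∑ i, ∑ j, f i t * f j t = (∑ i, f i t) ^ 2 := by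
    intro t; rw [sq, Finset.sum_mul_sum]
  simp_rw [e3]
  exact integral_nonneg fun t => sq_nonneg _
end

section
/- Let x₁, ..., x_N ∈ ℝ^D be vectors and define the N×N matrix A by A_{ij} = x_i ⊙ x_j, where u ⊙ v = Σ_{k=1}^D sign(u_k v_k)·min(|u_k|, |v_k|). Then A is symmetric and positive semi-definite. -/
open MeasureTheory Set

noncomputable def mfG (a : ℝ) : ℝ → ℝ :=
  fun t => Real.sign a * Set.indicator (Set.Ioc 0 |a|) 1 t

lemma mfIndicator_integrable (c : ℝ) : Integrable ((Ioc (0:ℝ) c).indicator (1:ℝ→ℝ)) := by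
  rw [integrable_indicator_iff measurableSet_Ioc]
  exact integrableOn_const measure_Ioc_lt_top.ne

lemma mfSign_mul (a b : ℝ) : Real.sign (a * b) = Real.sign a * Real.sign b := by
  rcases lt_trichotomy a 0 with ha | ha | ha <;>
    rcases lt_trichotomy b 0 with hb | hb | hb <;>
    simp [ha, hb, Real.sign_of_pos, Real.sign_of_neg, Real.sign_zero,
      mul_pos, mul_neg_of_pos_of_neg, mul_neg_of_neg_of_pos, mul_pos_of_neg_of_neg]

lemma mfG_mul (a b : ℝ) (t : ℝ) :
    mfG a t * mfG b t =
      (Real.sign a * Real.sign b) * Set.indicator (Set.Ioc 0 (min |a| |b|)) 1 t := by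
  unfold mfG
  have h : Set.indicator (Set.Ioc 0 |a|) (1 : ℝ → ℝ) t *
      Set.indicator (Set.Ioc 0 |b|) (1 : ℝ → ℝ) t =
      Set.indicator (Set.Ioc 0 (min |a| |b|)) (1 : ℝ → ℝ) t := by
    rw [← Set.inter_indicator_mul, Set.Ioc_inter_Ioc, max_self]
    simp [Set.indicator]
  rw [show Real.sign a * indicator (Ioc 0 |a|) 1 t * (Real.sign b * indicator (Ioc 0 |b|) 1 t)
      = Real.sign a * Real.sign b *
        (indicator (Ioc 0 |a|) (1:ℝ→ℝ) t * indicator (Ioc 0 |b|) (1:ℝ→ℝ) t) by ring, h]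

lemma mfG_mul_integrable (a b : ℝ) : Integrable (fun t => mfG a t * mfG b t) := by
  simp only [mfG_mul]
  exact (mfIndicator_integrable _).const_mul _

lemma mfG_integral (a b : ℝ) :
    ∫ t, mfG a t * mfG b t = Real.sign (a * b) * min |a| |b| := by
  simp only [mfG_mul]
  rw [integral_const_mul, integral_indicator_one measurableSet_Ioc, mfSign_mul,
    measureReal_def, Real.volume_Ioc]
  congr 1
  rw [sub_zero, ENNReal.toReal_ofReal (le_min (abs_nonneg a) (abs_nonneg b))]

theorem mf_covariance_posSemidef (N D : ℕ) (x : Fin N → Fin D → ℝ) :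
    (Matrix.of fun i j => ∑ k, Real.sign (x i k * x j k) * min |x i k| |x j k|).IsSymm ∧
    (Matrix.of fun i j => ∑ k, Real.sign (x i k * x j k) * min |x i k| |x j k|).PosSemidef := by
  have hsymm : (Matrix.of fun i j => ∑ k, Real.sign (x i k * x j k) * min |x i k| |x j k|).IsSymm := by
    ext i j
    simp only [Matrix.transpose_apply, Matrix.of_apply]
    congr 1
    ext k
    rw [mul_comm (x j k), min_comm]
  refine ⟨hsymm, Matrix.PosSemidef.of_dotProduct_mulVec_nonneg ?_ ?_⟩
  · exact hsymm
  · intro v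
    simp only [dotProduct, Matrix.mulVec, Matrix.of_apply, RCLike.star_def,
      Pi.star_apply, star_trivial]
    have key : ∀ i j, (∑ k, Real.sign (x i k * x j k) * min |x i k| |x j k|)
        = ∑ k, ∫ t, mfG (x i k) t * mfG (x j k) t := by
      intro i j; exact Finset.sum_congr rfl fun k _ => (mfG_integral _ _).symm
    calc (0:ℝ) ≤ ∑ k : Fin D, ∫ t, (∑ i, v i * mfG (x i k) t)^2 := by
            exact Finset.sum_nonneg fun k _ => integral_nonneg fun t => sq_nonneg _
      _ = ∑ k : Fin D, ∑ i, ∑ j, v i * v j * ∫ t, mfG (x i k) t * mfG (x j k) t := by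
            refine Finset.sum_congr rfl fun k _ => ?_
            have h1 : ∀ t, (∑ i, v i * mfG (x i k) t)^2
                = ∑ i, ∑ j, (v i * v j) * (mfG (x i k) t * mfG (x j k) t) := by
              intro t
              rw [sq, Finset.sum_mul_sum]
              refine Finset.sum_congr rfl fun i _ => Finset.sum_congr rfl fun j _ => by ring
            simp only [h1]
            rw [integral_finset_sum _ (fun i _ => ?_)]
            · refine Finset.sum_congr rfl fun i _ => ?_
              rw [integral_finset_sum _ (fun j _ =>
                ((mfG_mul_integrable (x i k) (x j k)).const_mul _))]
              exact Finset.sum_congr rfl fun j _ => integral_const_mul _ _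
            · exact integrable_finset_sum _ fun j _ =>
                ((mfG_mul_integrable (x i k) (x j k)).const_mul _)
      _ = ∑ i, v i * ∑ j, (∑ k, Real.sign (x i k * x j k) * min |x i k| |x j k|) * v j := by
            rw [Finset.sum_comm]
            refine Finset.sum_congr rfl fun i _ => ?_
            simp only [key, Finset.mul_sum, Finset.sum_mul]
            rw [Finset.sum_comm]
            exact Finset.sum_congr rfl fun j _ => Finset.sum_congr rfl fun k _ => by ring
end

section
/- Let x₁, ..., x_N ∈ ℝ^D and define the N×N matrix A by A_{ij} = Σ_{k=1}^D 𝟙(sign((x_i)_k) = sign((x_j)_k))·min(|(x_i)_k|, |(x_j)_k|). Then A is symmetric and positive semi-definite. -/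
open MeasureTheory

lemma indic_integrable (a : ℝ) :
    Integrable ((Set.Ioo (0:ℝ) a).indicator (1 : ℝ → ℝ)) := by
  rw [integrable_indicator_iff measurableSet_Ioo]
  exact integrableOn_const (by simp [Real.volume_Ioo])

lemma indic_mul (a b t : ℝ) :
    (Set.Ioo (0:ℝ) a).indicator (1 : ℝ → ℝ) t * (Set.Ioo (0:ℝ) b).indicator (1 : ℝ → ℝ) t
      = (Set.Ioo (0:ℝ) (min a b)).indicator (1 : ℝ → ℝ) t := by
  simp only [Set.indicator_apply, Set.mem_Ioo, Pi.one_apply]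
  split_ifs with h1 h2 h3 h3 <;> simp_all [lt_min_iff] <;> linarith

lemma integral_indic_prod (a b : ℝ) (ha : 0 ≤ a) (hb : 0 ≤ b) :
    ∫ t, (Set.Ioo (0:ℝ) a).indicator (1 : ℝ → ℝ) t * (Set.Ioo (0:ℝ) b).indicator (1 : ℝ → ℝ) t
      = min a b := by
  simp only [indic_mul]
  rw [integral_indicator_one measurableSet_Ioo, Real.volume_real_Ioo, sub_zero,
    max_eq_left (le_min ha hb)]

lemma minKernel (N : ℕ) (u : Fin N → ℝ) (hu : ∀ i, 0 ≤ u i) (v : Fin N → ℝ) :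
    0 ≤ ∑ i, ∑ j, v i * v j * min (u i) (u j) := by
  set g : Fin N → ℝ → ℝ := fun i t => v i * (Set.Ioo (0:ℝ) (u i)).indicator (1 : ℝ → ℝ) t with hg
  have key : ∀ i j, v i * v j * min (u i) (u j) = ∫ t, g i t * g j t := by
    intro i j
    rw [← integral_indic_prod (u i) (u j) (hu i) (hu j), ← integral_const_mul]
    congr 1; funext t; simp only [hg]; ring
  have hgg : ∀ i j : Fin N, Integrable (fun t => g i t * g j t) := by
    intro i j
    have : (fun t => g i t * g j t)
        = fun t => (v i * v j) * (Set.Ioo (0:ℝ) (min (u i) (u j))).indicator (1 : ℝ → ℝ) t := by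
      funext t; simp only [hg, ← indic_mul]; ring
    rw [this]
    exact (indic_integrable _).const_mul _
  have h2 : ∫ t, (∑ i, g i t)^2 = ∑ i, ∑ j, ∫ t, g i t * g j t := by
    have h1 : ∀ t : ℝ, (∑ i, g i t)^2 = ∑ i, ∑ j, g i t * g j t := fun t => by
      rw [sq, Finset.sum_mul_sum]
    simp only [h1]
    rw [integral_finset_sum _ (fun i _ => integrable_finset_sum _ (fun j _ => hgg i j))]
    exact Finset.sum_congr rfl fun i _ => integral_finset_sum _ fun j _ => hgg i j
  calc (0:ℝ) ≤ ∫ t, (∑ i, g i t)^2 := integral_nonneg fun t => sq_nonneg _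
    _ = ∑ i, ∑ j, v i * v j * min (u i) (u j) := by rw [h2]; simp only [key]

lemma entry_eq (a b : ℝ) :
    (if Real.sign a = Real.sign b then (1:ℝ) else 0) * min |a| |b|
      = min (max a 0) (max b 0) + min (max (-a) 0) (max (-b) 0) := by
  have hmax : ∀ c : ℝ, c < 0 → max c 0 = 0 := fun c hc => max_eq_right hc.le
  have hmax' : ∀ c : ℝ, 0 < c → max c 0 = c := fun c hc => max_eq_left hc.le
  rcases lt_trichotomy a 0 with ha | ha | ha <;>
    rcases lt_trichotomy b 0 with hb | hb | hb
  · rw [Real.sign_of_neg ha, Real.sign_of_neg hb, if_pos rfl, one_mul,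
      abs_of_neg ha, abs_of_neg hb, hmax a ha, hmax b hb,
      hmax' (-a) (by linarith), hmax' (-b) (by linarith)]
    simp [le_of_lt, *]
  · subst hb
    rw [Real.sign_of_neg ha, Real.sign_zero, if_neg (by norm_num), zero_mul]
    simp [hmax a ha, ha.le]
  · rw [Real.sign_of_neg ha, Real.sign_of_pos hb, if_neg (by norm_num), zero_mul,
      hmax a ha, hmax' b hb, hmax (-b) (by linarith)]
    simp [le_of_lt, *]
  · subst ha
    rw [Real.sign_of_neg hb, Real.sign_zero, if_neg (by norm_num), zero_mul]
    simp [hmax b hb, hb.le]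
  · subst ha; subst hb; simp
  · subst ha
    rw [Real.sign_of_pos hb, Real.sign_zero, if_neg (by norm_num), zero_mul]
    simp [hmax' b hb, hb.le]
  · rw [Real.sign_of_pos ha, Real.sign_of_neg hb, if_neg (by norm_num), zero_mul,
      hmax b hb, hmax' a ha, hmax (-a) (by linarith)]
    simp [le_of_lt, *]
  · subst hb
    rw [Real.sign_of_pos ha, Real.sign_zero, if_neg (by norm_num), zero_mul]
    simp [hmax' a ha, ha.le]
  · rw [Real.sign_of_pos ha, Real.sign_of_pos hb, if_pos rfl, one_mul,
      abs_of_pos ha, abs_of_pos hb, hmax' a ha, hmax' b hb,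
      hmax (-a) (by linarith), hmax (-b) (by linarith)]
    simp [le_of_lt, *]

theorem indicator_covariance_posSemidef (N D : ℕ) (x : Fin N → Fin D → ℝ) :
    (Matrix.of fun i j => ∑ k,
      (if Real.sign (x i k) = Real.sign (x j k) then (1:ℝ) else 0) * min |x i k| |x j k|).IsSymm ∧
    (Matrix.of fun i j => ∑ k,
      (if Real.sign (x i k) = Real.sign (x j k) then (1:ℝ) else 0) * min |x i k| |x j k|).PosSemidef := by
  have hsym : (Matrix.of fun i j => ∑ k,
      (if Real.sign (x i k) = Real.sign (x j k) then (1:ℝ) else 0) * min |x i k| |x j k|).IsSymm := by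
    ext i j
    simp only [Matrix.transpose_apply, Matrix.of_apply]
    refine Finset.sum_congr rfl fun k _ => ?_
    rw [min_comm]
    congr 1
    simp [eq_comm]
  refine ⟨hsym, Matrix.PosSemidef.of_dotProduct_mulVec_nonneg hsym fun v => ?_⟩
  simp only [dotProduct, Matrix.mulVec, Matrix.of_apply, Pi.star_apply, star_trivial,
    RCLike.re_to_real]
  have hre : (∑ i : Fin N, v i * ∑ j : Fin N, (∑ k : Fin D, (if Real.sign (x i k) = Real.sign (x j k) then (1:ℝ) else 0)
        * min |x i k| |x j k|) * v j)
      = ∑ k : Fin D, ∑ i : Fin N, ∑ j : Fin N, v i * v j *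
        ((if Real.sign (x i k) = Real.sign (x j k) then (1:ℝ) else 0) * min |x i k| |x j k|) := by
    have step1 : (∑ i : Fin N, v i * ∑ j : Fin N,
          (∑ k : Fin D, (if Real.sign (x i k) = Real.sign (x j k) then (1:ℝ) else 0)
            * min |x i k| |x j k|) * v j)
        = ∑ i : Fin N, ∑ j : Fin N, ∑ k : Fin D, v i * v j *
          ((if Real.sign (x i k) = Real.sign (x j k) then (1:ℝ) else 0) * min |x i k| |x j k|) := by
      refine Finset.sum_congr rfl fun i _ => ?_
      rw [Finset.mul_sum]
      refine Finset.sum_congr rfl fun j _ => ?_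
      rw [Finset.sum_mul, Finset.mul_sum]
      exact Finset.sum_congr rfl fun k _ => by ring
    rw [step1]
    rw [show (∑ i : Fin N, ∑ j : Fin N, ∑ k : Fin D, v i * v j *
          ((if Real.sign (x i k) = Real.sign (x j k) then (1:ℝ) else 0) * min |x i k| |x j k|))
        = ∑ i : Fin N, ∑ k : Fin D, ∑ j : Fin N, v i * v j *
          ((if Real.sign (x i k) = Real.sign (x j k) then (1:ℝ) else 0) * min |x i k| |x j k|)
      from Finset.sum_congr rfl fun i _ => Finset.sum_comm]
    exact Finset.sum_comm
  rw [hre]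
  refine Finset.sum_nonneg fun k _ => ?_
  simp only [entry_eq, mul_add, Finset.sum_add_distrib]
  exact add_nonneg
    (minKernel N (fun i => max (x i k) 0) (fun i => le_max_right _ _) v)
    (minKernel N (fun i => max (-(x i k)) 0) (fun i => le_max_right _ _) v)
end
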